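/- Let 1 ≤ β < 2 and set α = (2−β)/2. There is a constant C such that for all sufficiently large b > 0, ∬_{max(|τ|, r) > b^{1/α}, r > 0} [1/(1 + (τ+r)²/4) + 1/(1 + (τ−r)²/4)] · r^{β−1}/(1+r²) dτ dr ≤ C b^{−2}. -/

import Mathlib

open MeasureTheory Real Set
open scoped ENNReal

private lemma cauchy_lint_le' : ∫⁻ x : ℝ, ENNReal.ofReal (1/(1+x^2/4)) ≤ ENNReal.ofReal (4 * π) := by
  have h1 : ∀ x : ℝ, 1/(1+x^2/4) ≤ 4 * (1+x^2)⁻¹ := by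
    intro x
    have h2 : (0:ℝ) < 1 + x^2 := by positivity
    rw [div_le_iff₀ (by positivity), mul_comm (4:ℝ), mul_assoc, ← div_eq_inv_mul,
      le_div_iff₀ h2]
    nlinarith [sq_nonneg x]
  calc ∫⁻ x : ℝ, ENNReal.ofReal (1/(1+x^2/4))
      ≤ ∫⁻ x : ℝ, ENNReal.ofReal (4 * (1+x^2)⁻¹) := lintegral_mono fun x => ENNReal.ofReal_le_ofReal (h1 x)
    _ = ENNReal.ofReal (∫ x : ℝ, 4 * (1+x^2)⁻¹) := by
        rw [← ofReal_integral_eq_lintegral_ofReal (integrable_inv_one_add_sq.const_mul 4)]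
        exact Filter.Eventually.of_forall fun x => by positivity
    _ = ENNReal.ofReal (4 * π) := by
        rw [integral_const_mul, integral_univ_inv_one_add_sq]

private lemma rpow_lint' {p : ℝ} (hp : p < -1) {R : ℝ} (hR : 0 < R) :
    ∫⁻ r in Ioi R, ENNReal.ofReal (r ^ p) = ENNReal.ofReal (-R^(p+1) / (p+1)) := by
  rw [← integral_Ioi_rpow_of_lt hp hR,
    ← ofReal_integral_eq_lintegral_ofReal (integrableOn_Ioi_rpow_of_lt hp hR)]
  filter_upwards [ae_restrict_mem measurableSet_Ioi] with r hr
  exact rpow_nonneg (hR.trans hr).le _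

private lemma lint_Iio_neg' (g : ℝ → ℝ≥0∞) (hg : Measurable g) (R : ℝ) :
    ∫⁻ x in Iio (-R), g x = ∫⁻ x in Ioi R, g (-x) := by
  rw [← Measure.map_neg_eq_self (volume : Measure ℝ),
    Measure.restrict_map measurable_neg measurableSet_Iio,
    lintegral_map hg measurable_neg]
  congr 1
  ext x
  simp [neg_lt_neg_iff]

private lemma prod_fub' (F : ℝ × ℝ → ℝ≥0∞) (hF : Measurable F) (s t : Set ℝ) :
    ∫⁻ p in s ×ˢ t, F p = ∫⁻ r in t, ∫⁻ τ in s, F (τ, r) := by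
  rw [Measure.volume_eq_prod, ← Measure.prod_restrict,
    lintegral_prod_symm' _ hF]

private lemma prod_fub2' (F : ℝ × ℝ → ℝ≥0∞) (hF : Measurable F) (s t : Set ℝ) :
    ∫⁻ p in s ×ˢ t, F p = ∫⁻ τ in s, ∫⁻ r in t, F (τ, r) := by
  rw [Measure.volume_eq_prod, ← Measure.prod_restrict,
    lintegral_prod _ hF.aemeasurable]

private lemma g_le_rpow' {β r : ℝ} (hr : 0 < r) : r^(β-1)/(1+r^2) ≤ r^(β-3) := by
  have h1 : r^(β-1)/(1+r^2) ≤ r^(β-1)/r^2 :=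
    div_le_div_of_nonneg_left (rpow_nonneg hr.le _) (by positivity) (by nlinarith)
  calc r^(β-1)/(1+r^2) ≤ r^(β-1)/r^2 := h1
    _ = r^(β-3) := by
      rw [← Real.rpow_two, ← Real.rpow_sub hr]
      ring_nf

private lemma g_lint_le' {β : ℝ} (hβ1 : 1 ≤ β) (hβ2 : β < 2) :
    ∫⁻ r in Ioi (0:ℝ), ENNReal.ofReal (r^(β-1)/(1+r^2)) ≤ ENNReal.ofReal (1 + 1/(2-β)) := by
  have hsub : Ioi (0:ℝ) ⊆ Ioc 0 1 ∪ Ioi 1 := by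
    intro r hr
    rcases le_or_gt r 1 with h | h
    · exact Or.inl ⟨hr, h⟩
    · exact Or.inr h
  calc ∫⁻ r in Ioi (0:ℝ), ENNReal.ofReal (r^(β-1)/(1+r^2))
      ≤ ∫⁻ r in Ioc (0:ℝ) 1 ∪ Ioi 1, ENNReal.ofReal (r^(β-1)/(1+r^2)) :=
        lintegral_mono_set hsub
    _ ≤ (∫⁻ r in Ioc (0:ℝ) 1, ENNReal.ofReal (r^(β-1)/(1+r^2)))
        + ∫⁻ r in Ioi (1:ℝ), ENNReal.ofReal (r^(β-1)/(1+r^2)) := lintegral_union_le _ _ _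
    _ ≤ ENNReal.ofReal 1 + ENNReal.ofReal (1/(2-β)) := by
        gcongr
        · calc (∫⁻ r in Ioc (0:ℝ) 1, ENNReal.ofReal (r^(β-1)/(1+r^2)))
              ≤ ∫⁻ _ in Ioc (0:ℝ) 1, ENNReal.ofReal 1 := by
                refine setLIntegral_mono measurable_const fun r hr => ?_
                refine ENNReal.ofReal_le_ofReal ?_
                have h1 : r^(β-1) ≤ 1 := Real.rpow_le_one hr.1.le hr.2 (by linarith)
                have h2 : (1:ℝ) ≤ 1 + r^2 := by nlinarith
                calc r^(β-1)/(1+r^2) ≤ r^(β-1)/1 := by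
                      exact div_le_div_of_nonneg_left (rpow_nonneg hr.1.le _) one_pos h2
                  _ ≤ 1 := by rwa [div_one]
            _ = ENNReal.ofReal 1 * volume (Ioc (0:ℝ) 1) := setLIntegral_const _ _
            _ = ENNReal.ofReal 1 := by simp
        · calc (∫⁻ r in Ioi (1:ℝ), ENNReal.ofReal (r^(β-1)/(1+r^2)))
              ≤ ∫⁻ r in Ioi (1:ℝ), ENNReal.ofReal (r^(β-3)) := by
                refine setLIntegral_mono (by fun_prop) fun r hr => ?_
                exact ENNReal.ofReal_le_ofReal (g_le_rpow' (lt_trans one_pos hr))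
            _ = ENNReal.ofReal (-1^(β-3+1)/(β-3+1)) := rpow_lint' (by linarith) one_pos
            _ = ENNReal.ofReal (1/(2-β)) := by
                rw [Real.one_rpow]
                congr 1
                rw [one_div, neg_div, div_eq_mul_inv, one_mul, ← inv_neg]
                ring_nf
    _ ≤ ENNReal.ofReal (1 + 1/(2-β)) := by
        have h : (0:ℝ) < 2-β := by linarith
        rw [← ENNReal.ofReal_add one_pos.le (by positivity)]

private lemma inner1' {β : ℝ} (r : ℝ) (hr : 0 < r) :
    ∫⁻ τ : ℝ, ENNReal.ofReal ((1/(1+(τ+r)^2/4) + 1/(1+(τ-r)^2/4)) * (r^(β-1)/(1+r^2)))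
      ≤ ENNReal.ofReal (8*π) * ENNReal.ofReal (r^(β-3)) := by
  have hmeas : Measurable fun τ : ℝ => ENNReal.ofReal (1/(1+(τ+r)^2/4)) := by fun_prop
  calc ∫⁻ τ : ℝ, ENNReal.ofReal ((1/(1+(τ+r)^2/4) + 1/(1+(τ-r)^2/4)) * (r^(β-1)/(1+r^2)))
      ≤ ∫⁻ τ : ℝ, (ENNReal.ofReal (1/(1+(τ+r)^2/4)) + ENNReal.ofReal (1/(1+(τ-r)^2/4)))
          * ENNReal.ofReal (r^(β-3)) := by
        refine lintegral_mono fun τ => ?_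
        rw [← ENNReal.ofReal_add (by positivity) (by positivity), ← ENNReal.ofReal_mul (by positivity)]
        refine ENNReal.ofReal_le_ofReal ?_
        exact mul_le_mul_of_nonneg_left (g_le_rpow' hr) (by positivity)
    _ = ((∫⁻ τ : ℝ, ENNReal.ofReal (1/(1+(τ+r)^2/4)))
          + ∫⁻ τ : ℝ, ENNReal.ofReal (1/(1+(τ-r)^2/4))) * ENNReal.ofReal (r^(β-3)) := by
        rw [lintegral_mul_const' _ _ ENNReal.ofReal_ne_top, lintegral_add_left hmeas]
    _ ≤ (ENNReal.ofReal (4*π) + ENNReal.ofReal (4*π)) * ENNReal.ofReal (r^(β-3)) := by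
        gcongr
        · exact le_trans (le_of_eq (lintegral_add_right_eq_self
            (fun x => ENNReal.ofReal (1/(1+x^2/4))) r)) cauchy_lint_le'
        · exact le_trans (le_of_eq (lintegral_sub_right_eq_self
            (fun x => ENNReal.ofReal (1/(1+x^2/4))) r)) cauchy_lint_le'
    _ = ENNReal.ofReal (8*π) * ENNReal.ofReal (r^(β-3)) := by
        rw [← ENNReal.ofReal_add (by positivity) (by positivity)]
        ring_nf
private lemma inner2' {β : ℝ} (hβ1 : 1 ≤ β) (hβ2 : β < 2) (τ : ℝ) (hτ : 1 ≤ |τ|) :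
    ∫⁻ r in Ioi (0:ℝ), ENNReal.ofReal ((1/(1+(τ+r)^2/4) + 1/(1+(τ-r)^2/4)) * (r^(β-1)/(1+r^2)))
      ≤ ENNReal.ofReal ((24*(1+1/(2-β)) + 16*π) * |τ|^(β-3)) := by
  have h2β : (0:ℝ) < 2 - β := by linarith
  set s := |τ| with hs
  have hs0 : 0 < s := lt_of_lt_of_le one_pos hτ
  have hMg : (0:ℝ) ≤ 1 + 1/(2-β) := by positivity
  have key : ∀ r : ℝ, 1/(1+(τ+r)^2/4) + 1/(1+(τ-r)^2/4)
      = 1/(1+(s+r)^2/4) + 1/(1+(s-r)^2/4) := by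
    intro r
    rcases abs_cases τ with ⟨h, _⟩ | ⟨h, _⟩ <;> rw [hs, h]
    ring_nf
  have hsplit : Ioi (0:ℝ) ⊆ Ioc 0 (s/2) ∪ Ioi (s/2) := by
    intro r hr
    rcases le_or_gt r (s/2) with h | h
    · exact Or.inl ⟨hr, h⟩
    · exact Or.inr h
  have hc1 : ∀ r : ℝ, 0 < r → 1/(1+(s+r)^2/4) ≤ 4/s^2 := by
    intro r hr
    rw [div_le_div_iff₀ (by positivity) (by positivity)]
    nlinarith [sq_nonneg r, sq_nonneg (s+r)]
  -- J1 bound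
  have hJ1 : ∫⁻ r in Ioc (0:ℝ) (s/2),
      ENNReal.ofReal ((1/(1+(s+r)^2/4) + 1/(1+(s-r)^2/4)) * (r^(β-1)/(1+r^2)))
      ≤ ENNReal.ofReal (20/s^2 * (1 + 1/(2-β))) := by
    calc ∫⁻ r in Ioc (0:ℝ) (s/2),
        ENNReal.ofReal ((1/(1+(s+r)^2/4) + 1/(1+(s-r)^2/4)) * (r^(β-1)/(1+r^2)))
        ≤ ∫⁻ r in Ioc (0:ℝ) (s/2),
            ENNReal.ofReal (20/s^2) * ENNReal.ofReal (r^(β-1)/(1+r^2)) := by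
          refine setLIntegral_mono (by fun_prop) fun r hr => ?_
          rw [← ENNReal.ofReal_mul (by positivity)]
          refine ENNReal.ofReal_le_ofReal ?_
          have hr0 : 0 < r := hr.1
          have hb2 : 1/(1+(s-r)^2/4) ≤ 16/s^2 := by
            rw [div_le_div_iff₀ (by positivity) (by positivity)]
            nlinarith [hr.2, sq_nonneg (s - 2*r)]
          have hg0 : 0 ≤ r^(β-1)/(1+r^2) := by positivity
          have hsum := mul_le_mul_of_nonneg_right (add_le_add (hc1 r hr0) hb2) hg0
          have he : 4/s^2 + 16/s^2 = 20/s^2 := by ring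
          rw [he] at hsum
          exact hsum
      _ = ENNReal.ofReal (20/s^2) * ∫⁻ r in Ioc (0:ℝ) (s/2), ENNReal.ofReal (r^(β-1)/(1+r^2)) :=
          lintegral_const_mul' _ _ ENNReal.ofReal_ne_top
      _ ≤ ENNReal.ofReal (20/s^2) * ENNReal.ofReal (1 + 1/(2-β)) := by
          gcongr
          refine le_trans (lintegral_mono_set ?_) (g_lint_le' hβ1 hβ2)
          exact Ioc_subset_Ioi_self
      _ = ENNReal.ofReal (20/s^2 * (1 + 1/(2-β))) := by
          rw [← ENNReal.ofReal_mul (by positivity)]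
  -- J2 bound
  have hJ2 : ∫⁻ r in Ioi (s/2),
      ENNReal.ofReal ((1/(1+(s+r)^2/4) + 1/(1+(s-r)^2/4)) * (r^(β-1)/(1+r^2)))
      ≤ ENNReal.ofReal (4/s^2 * (1 + 1/(2-β))) + ENNReal.ofReal ((s/2)^(β-3) * (4*π)) := by
    calc ∫⁻ r in Ioi (s/2),
        ENNReal.ofReal ((1/(1+(s+r)^2/4) + 1/(1+(s-r)^2/4)) * (r^(β-1)/(1+r^2)))
        ≤ ∫⁻ r in Ioi (s/2),
            (ENNReal.ofReal (4/s^2) * ENNReal.ofReal (r^(β-1)/(1+r^2))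
              + ENNReal.ofReal ((s/2)^(β-3)) * ENNReal.ofReal (1/(1+(s-r)^2/4))) := by
          refine setLIntegral_mono (by fun_prop) fun r hr => ?_
          have hr0 : 0 < r := lt_trans (by positivity) hr
          rw [← ENNReal.ofReal_mul (by positivity),
            ← ENNReal.ofReal_mul (rpow_nonneg (by positivity) _),
            ← ENNReal.ofReal_add (mul_nonneg (by positivity)
              (div_nonneg (rpow_nonneg hr0.le _) (by positivity)))
              (mul_nonneg (rpow_nonneg (by positivity) _) (by positivity))]
          refine ENNReal.ofReal_le_ofReal ?_
          have h1 : 1/(1+(s+r)^2/4) * (r^(β-1)/(1+r^2)) ≤ 4/s^2 * (r^(β-1)/(1+r^2)) :=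
            mul_le_mul_of_nonneg_right (hc1 r hr0) (by positivity)
          have h2 : 1/(1+(s-r)^2/4) * (r^(β-1)/(1+r^2)) ≤ (s/2)^(β-3) * (1/(1+(s-r)^2/4)) := by
            rw [mul_comm ((s/2)^(β-3))]
            refine mul_le_mul_of_nonneg_left ?_ (by positivity)
            refine le_trans (g_le_rpow' hr0) ?_
            exact rpow_le_rpow_of_nonpos (by positivity) hr.le (by linarith)
          nlinarith [h1, h2]
      _ = ENNReal.ofReal (4/s^2) * (∫⁻ r in Ioi (s/2), ENNReal.ofReal (r^(β-1)/(1+r^2)))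
            + ENNReal.ofReal ((s/2)^(β-3)) * ∫⁻ r in Ioi (s/2), ENNReal.ofReal (1/(1+(s-r)^2/4)) := by
          rw [lintegral_add_left (by fun_prop), lintegral_const_mul' _ _ ENNReal.ofReal_ne_top,
            lintegral_const_mul' _ _ ENNReal.ofReal_ne_top]
      _ ≤ ENNReal.ofReal (4/s^2) * ENNReal.ofReal (1 + 1/(2-β))
            + ENNReal.ofReal ((s/2)^(β-3)) * ENNReal.ofReal (4*π) := by
          gcongr
          · refine le_trans (lintegral_mono_set ?_) (g_lint_le' hβ1 hβ2)
            exact Ioi_subset_Ioi (by positivity)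
          · calc ∫⁻ r in Ioi (s/2), ENNReal.ofReal (1/(1+(s-r)^2/4))
                ≤ ∫⁻ r : ℝ, ENNReal.ofReal (1/(1+(s-r)^2/4)) := setLIntegral_le_lintegral _ _
              _ = ∫⁻ r : ℝ, ENNReal.ofReal (1/(1+(r-s)^2/4)) := by
                  refine lintegral_congr fun r => ?_
                  congr 1
                  ring_nf
              _ ≤ ENNReal.ofReal (4*π) := le_trans (le_of_eq (lintegral_sub_right_eq_self
                    (fun x => ENNReal.ofReal (1/(1+x^2/4))) s)) cauchy_lint_le'
      _ = ENNReal.ofReal (4/s^2 * (1 + 1/(2-β))) + ENNReal.ofReal ((s/2)^(β-3) * (4*π)) := by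
          rw [← ENNReal.ofReal_mul (by positivity), ← ENNReal.ofReal_mul (by positivity)]
  -- combine
  calc ∫⁻ r in Ioi (0:ℝ), ENNReal.ofReal ((1/(1+(τ+r)^2/4) + 1/(1+(τ-r)^2/4)) * (r^(β-1)/(1+r^2)))
      = ∫⁻ r in Ioi (0:ℝ),
          ENNReal.ofReal ((1/(1+(s+r)^2/4) + 1/(1+(s-r)^2/4)) * (r^(β-1)/(1+r^2))) := by
        refine lintegral_congr fun r => by rw [key r]
    _ ≤ ∫⁻ r in Ioc (0:ℝ) (s/2) ∪ Ioi (s/2),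
          ENNReal.ofReal ((1/(1+(s+r)^2/4) + 1/(1+(s-r)^2/4)) * (r^(β-1)/(1+r^2))) :=
        lintegral_mono_set hsplit
    _ ≤ (∫⁻ r in Ioc (0:ℝ) (s/2),
          ENNReal.ofReal ((1/(1+(s+r)^2/4) + 1/(1+(s-r)^2/4)) * (r^(β-1)/(1+r^2))))
        + ∫⁻ r in Ioi (s/2),
          ENNReal.ofReal ((1/(1+(s+r)^2/4) + 1/(1+(s-r)^2/4)) * (r^(β-1)/(1+r^2))) :=
        lintegral_union_le _ _ _
    _ ≤ ENNReal.ofReal (20/s^2 * (1 + 1/(2-β)))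
        + (ENNReal.ofReal (4/s^2 * (1 + 1/(2-β))) + ENNReal.ofReal ((s/2)^(β-3) * (4*π))) := by
        gcongr
    _ ≤ ENNReal.ofReal ((24*(1+1/(2-β)) + 16*π) * s^(β-3)) := by
        rw [← ENNReal.ofReal_add (by positivity) (by positivity),
          ← ENNReal.ofReal_add (by positivity) (by positivity)]
        refine ENNReal.ofReal_le_ofReal ?_
        have e1 : (1:ℝ)/s^2 ≤ s^(β-3) := by
          have : s^(-2:ℝ) ≤ s^(β-3) := rpow_le_rpow_of_exponent_le hτ (by linarith)
          calc (1:ℝ)/s^2 = s^(-2:ℝ) := by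
                rw [Real.rpow_neg hs0.le, Real.rpow_two, one_div]
            _ ≤ s^(β-3) := this
        have e2 : (s/2)^(β-3) ≤ 4 * s^(β-3) := by
          rw [Real.div_rpow hs0.le (by norm_num)]
          have h24 : (1:ℝ)/4 ≤ (2:ℝ)^(β-3) := by
            have : (2:ℝ)^(-2:ℝ) ≤ (2:ℝ)^(β-3) := rpow_le_rpow_of_exponent_le one_le_two (by linarith)
            calc (1:ℝ)/4 = (2:ℝ)^(-2:ℝ) := by
                  rw [Real.rpow_neg (by norm_num), Real.rpow_two]; norm_num
              _ ≤ _ := this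
          rw [div_le_iff₀ (by positivity)]
          have hsp : (0:ℝ) ≤ s^(β-3) := rpow_nonneg hs0.le _
          nlinarith [h24, hsp]
        have hsp : (0:ℝ) ≤ s^(β-3) := rpow_nonneg hs0.le _
        have hπ : (0:ℝ) < π := pi_pos
        have h20 : 20/s^2*(1+1/(2-β)) = 20*(1+1/(2-β))*(1/s^2) := by ring
        have h4 : 4/s^2*(1+1/(2-β)) = 4*(1+1/(2-β))*(1/s^2) := by ring
        rw [h20, h4]
        nlinarith [mul_le_mul_of_nonneg_left e1 (by positivity : (0:ℝ) ≤ 20*(1+1/(2-β))),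
          mul_le_mul_of_nonneg_left e1 (by positivity : (0:ℝ) ≤ 4*(1+1/(2-β))),
          mul_le_mul_of_nonneg_left e2 (by positivity : (0:ℝ) ≤ 4*π)]

theorem stmt_9 (β : ℝ) (hβ1 : 1 ≤ β) (hβ2 : β < 2) (α : ℝ) (hα : α = (2 - β) / 2) :
    ∃ C : ℝ, ∃ b₀ > (0 : ℝ), ∀ b ≥ b₀,
      ∫ p in {p : ℝ × ℝ | max |p.1| p.2 > b ^ (1 / α) ∧ 0 < p.2},
        (1 / (1 + (p.1 + p.2) ^ 2 / 4) + 1 / (1 + (p.1 - p.2) ^ 2 / 4)) *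
          (p.2 ^ (β - 1) / (1 + p.2 ^ 2)) ≤
      C * b ^ (-2 : ℝ) := by
  have h2β : (0:ℝ) < 2 - β := by linarith
  have hπ : (0:ℝ) < π := pi_pos
  set K2 : ℝ := 24*(1+1/(2-β)) + 16*π with hK2
  have hK2pos : (0:ℝ) < K2 := by positivity
  refine ⟨(8*π + 2*K2)/(2-β), 1, one_pos, fun b hb => ?_⟩
  have hb0 : (0:ℝ) < b := lt_of_lt_of_le one_pos hb
  set R : ℝ := b ^ (1/α) with hRdef
  have hα0 : (0:ℝ) ≤ 1/α := by rw [hα]; positivity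
  have hR1 : 1 ≤ R := by
    rw [hRdef]
    calc (1:ℝ) = 1 ^ (1/α) := (Real.one_rpow _).symm
      _ ≤ b ^ (1/α) := Real.rpow_le_rpow one_pos.le hb hα0
  have hR0 : (0:ℝ) < R := lt_of_lt_of_le one_pos hR1
  have hRb : R ^ (β-2) = b ^ (-2:ℝ) := by
    rw [hRdef, ← Real.rpow_mul hb0.le]
    congr 1
    rw [hα]
    field_simp
    ring
  set f : ℝ × ℝ → ℝ := fun p =>
    (1 / (1 + (p.1 + p.2) ^ 2 / 4) + 1 / (1 + (p.1 - p.2) ^ 2 / 4)) *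
      (p.2 ^ (β - 1) / (1 + p.2 ^ 2)) with hf
  set S : Set (ℝ × ℝ) := {p : ℝ × ℝ | max |p.1| p.2 > R ∧ 0 < p.2} with hSdef
  have hfm : Measurable f := by
    rw [hf]; fun_prop
  have hFm : Measurable fun p : ℝ × ℝ => ENNReal.ofReal (f p) := hfm.ennreal_ofReal
  have hS : MeasurableSet S := by
    have h1 : IsOpen {p : ℝ × ℝ | R < max |p.1| p.2} :=
      isOpen_lt continuous_const ((continuous_fst.abs).max continuous_snd)
    have h2 : IsOpen {p : ℝ × ℝ | 0 < p.2} := isOpen_lt continuous_const continuous_snd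
    exact (h1.inter h2).measurableSet
  have hnn : 0 ≤ᵐ[volume.restrict S] f := by
    rw [Filter.EventuallyLE, ae_restrict_iff' hS]
    refine Filter.Eventually.of_forall fun p hp => ?_
    have h2 : (0:ℝ) < p.2 := hp.2
    have h3 : (0:ℝ) ≤ p.2 ^ (β-1) := rpow_nonneg h2.le _
    simp only [hf, Pi.zero_apply]
    exact mul_nonneg (by positivity) (div_nonneg h3 (by positivity))
  have hints : ∫ p in S, f p
      = (∫⁻ p in S, ENNReal.ofReal (f p)).toReal :=
    integral_eq_lintegral_of_nonneg_ae hnn hfm.aestronglyMeasurable.restrict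
  -- L1 bound
  have hL1 : ∫⁻ p in (univ : Set ℝ) ×ˢ Ioi R, ENNReal.ofReal (f p)
      ≤ ENNReal.ofReal (8*π/(2-β) * b^(-2:ℝ)) := by
    calc ∫⁻ p in (univ : Set ℝ) ×ˢ Ioi R, ENNReal.ofReal (f p)
        = ∫⁻ r in Ioi R, ∫⁻ τ : ℝ, ENNReal.ofReal (f (τ, r)) := by
          rw [prod_fub' _ hFm univ (Ioi R)]
          simp [Measure.restrict_univ]
      _ ≤ ∫⁻ r in Ioi R, ENNReal.ofReal (8*π) * ENNReal.ofReal (r^(β-3)) := by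
          refine setLIntegral_mono (by fun_prop) fun r hr => ?_
          have hr0 : (0:ℝ) < r := lt_trans hR0 hr
          simpa only [hf] using inner1' (β := β) r hr0
      _ = ENNReal.ofReal (8*π) * ∫⁻ r in Ioi R, ENNReal.ofReal (r^(β-3)) :=
          lintegral_const_mul' _ _ ENNReal.ofReal_ne_top
      _ = ENNReal.ofReal (8*π) * ENNReal.ofReal (-R^(β-3+1)/(β-3+1)) := by
          rw [rpow_lint' (by linarith) hR0]
      _ = ENNReal.ofReal (8*π/(2-β) * b^(-2:ℝ)) := by
          rw [← ENNReal.ofReal_mul (by positivity)]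
          congr 1
          have he : β - 3 + 1 = β - 2 := by ring
          have hne : β - (2:ℝ) ≠ 0 := by intro h; linarith
          have hne2 : (2:ℝ) - β ≠ 0 := h2β.ne'
          rw [he, ← hRb]
          field_simp [hne, hne2]
          ring
  -- tail integral over Ioi R
  have hgm : Measurable fun τ : ℝ => ENNReal.ofReal (K2 * |τ|^(β-3)) := by fun_prop
  have htail : ∫⁻ τ in Ioi R, ENNReal.ofReal (K2 * |τ|^(β-3))
      ≤ ENNReal.ofReal (K2/(2-β) * b^(-2:ℝ)) := by
    calc ∫⁻ τ in Ioi R, ENNReal.ofReal (K2 * |τ|^(β-3))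
        = ∫⁻ τ in Ioi R, ENNReal.ofReal K2 * ENNReal.ofReal (τ^(β-3)) := by
          refine setLIntegral_congr_fun measurableSet_Ioi
            (fun τ hτ => ?_)
          rw [abs_of_pos (lt_trans hR0 hτ), ENNReal.ofReal_mul hK2pos.le]
      _ = ENNReal.ofReal K2 * ENNReal.ofReal (-R^(β-3+1)/(β-3+1)) := by
          rw [lintegral_const_mul' _ _ ENNReal.ofReal_ne_top, rpow_lint' (by linarith) hR0]
      _ ≤ ENNReal.ofReal (K2/(2-β) * b^(-2:ℝ)) := by
          rw [← ENNReal.ofReal_mul hK2pos.le]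
          refine le_of_eq ?_
          congr 1
          have hne : β - (2:ℝ) ≠ 0 := by intro h; linarith
          have hne2 : (2:ℝ) - β ≠ 0 := h2β.ne'
          have he : β - 3 + 1 = β - 2 := by ring
          rw [he, ← hRb]
          field_simp [hne, hne2]
          ring
  -- L2 bound
  have hL2 : ∫⁻ p in (Iio (-R) ∪ Ioi R) ×ˢ Ioi (0:ℝ), ENNReal.ofReal (f p)
      ≤ ENNReal.ofReal (2*K2/(2-β) * b^(-2:ℝ)) := by
    calc ∫⁻ p in (Iio (-R) ∪ Ioi R) ×ˢ Ioi (0:ℝ), ENNReal.ofReal (f p)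
        = ∫⁻ τ in Iio (-R) ∪ Ioi R, ∫⁻ r in Ioi (0:ℝ), ENNReal.ofReal (f (τ, r)) :=
          prod_fub2' _ hFm _ _
      _ ≤ ∫⁻ τ in Iio (-R) ∪ Ioi R, ENNReal.ofReal (K2 * |τ|^(β-3)) := by
          refine setLIntegral_mono hgm fun τ hτ => ?_
          have h1 : 1 ≤ |τ| := by
            rcases hτ with h | h
            · rw [abs_of_neg (by simp only [Set.mem_Iio] at h; linarith)]
              simp only [Set.mem_Iio] at h
              linarith
            · rw [abs_of_pos (lt_trans hR0 h)]
              exact le_trans hR1 (le_of_lt h)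
          simpa only [hf, hK2] using inner2' hβ1 hβ2 τ h1
      _ ≤ (∫⁻ τ in Iio (-R), ENNReal.ofReal (K2 * |τ|^(β-3)))
          + ∫⁻ τ in Ioi R, ENNReal.ofReal (K2 * |τ|^(β-3)) := lintegral_union_le _ _ _
      _ ≤ ENNReal.ofReal (K2/(2-β) * b^(-2:ℝ)) + ENNReal.ofReal (K2/(2-β) * b^(-2:ℝ)) := by
          refine add_le_add ?_ htail
          calc ∫⁻ τ in Iio (-R), ENNReal.ofReal (K2 * |τ|^(β-3))
              = ∫⁻ τ in Ioi R, ENNReal.ofReal (K2 * |(-τ)|^(β-3)) := lint_Iio_neg' _ hgm R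
            _ = ∫⁻ τ in Ioi R, ENNReal.ofReal (K2 * |τ|^(β-3)) := by
                simp only [abs_neg]
            _ ≤ _ := htail
      _ = ENNReal.ofReal (2*K2/(2-β) * b^(-2:ℝ)) := by
          have hb2 : (0:ℝ) ≤ b^(-2:ℝ) := rpow_nonneg hb0.le _
          rw [← ENNReal.ofReal_add (by positivity) (by positivity)]
          congr 1
          ring
  -- combine
  have hsub : S ⊆ ((univ : Set ℝ) ×ˢ Ioi R) ∪ ((Iio (-R) ∪ Ioi R) ×ˢ Ioi (0:ℝ)) := by
    rintro ⟨τ, r⟩ ⟨h1, h2⟩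
    simp only [Set.mem_union, Set.mem_prod, Set.mem_Ioi, Set.mem_Iio, Set.mem_univ, true_and]
    rcases lt_max_iff.mp h1 with h | h
    · rcases lt_abs.mp h with h' | h'
      · exact Or.inr ⟨Or.inr h', h2⟩
      · exact Or.inr ⟨Or.inl (by linarith), h2⟩
    · exact Or.inl h
  have hmain : ∫⁻ p in S, ENNReal.ofReal (f p)
      ≤ ENNReal.ofReal ((8*π + 2*K2)/(2-β) * b^(-2:ℝ)) := by
    calc ∫⁻ p in S, ENNReal.ofReal (f p)
        ≤ ∫⁻ p in ((univ : Set ℝ) ×ˢ Ioi R) ∪ ((Iio (-R) ∪ Ioi R) ×ˢ Ioi (0:ℝ)),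
            ENNReal.ofReal (f p) := lintegral_mono_set hsub
      _ ≤ (∫⁻ p in (univ : Set ℝ) ×ˢ Ioi R, ENNReal.ofReal (f p))
          + ∫⁻ p in (Iio (-R) ∪ Ioi R) ×ˢ Ioi (0:ℝ), ENNReal.ofReal (f p) :=
          lintegral_union_le _ _ _
      _ ≤ ENNReal.ofReal (8*π/(2-β) * b^(-2:ℝ)) + ENNReal.ofReal (2*K2/(2-β) * b^(-2:ℝ)) :=
          add_le_add hL1 hL2
      _ = ENNReal.ofReal ((8*π + 2*K2)/(2-β) * b^(-2:ℝ)) := by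
          have hb2 : (0:ℝ) ≤ b^(-2:ℝ) := rpow_nonneg hb0.le _
          rw [← ENNReal.ofReal_add (by positivity) (by positivity)]
          congr 1
          ring
  have hC0 : (0:ℝ) ≤ (8*π + 2*K2)/(2-β) * b^(-2:ℝ) :=
    mul_nonneg (div_nonneg (by positivity) h2β.le) (rpow_nonneg hb0.le _)
  calc ∫ p in S, f p = (∫⁻ p in S, ENNReal.ofReal (f p)).toReal := hints
    _ ≤ (ENNReal.ofReal ((8*π + 2*K2)/(2-β) * b^(-2:ℝ))).toReal :=
        ENNReal.toReal_mono ENNReal.ofReal_ne_top hmain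
    _ = (8*π + 2*K2)/(2-β) * b^(-2:ℝ) := ENNReal.toReal_ofReal hC0
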